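/- arXiv:1106.5424 — 2 statements merged into one kernel-verified Lean document; each statement's English description precedes it below -/
import Mathlib

section
/- For every n ≥ 3, there is exactly one signed permutation σ of rank n whose full index set {1,...,n} forms an n-crossing, namely σ(i) = −(n+1)+i for 1 ≤ i ≤ n; equivalently, it is the unique σ ∈ B_n with σ(1) < σ(2) < ... < σ(n) < 1 satisfying the lower n-crossing condition. For n ≤ 2 there are exactly two such signed permutations. -/
def SignedSet (n : ℕ) : Set ℤ := {i : ℤ | i ≠ 0 ∧ |i| ≤ (n : ℤ)}

/-- A signed permutation (type B permutation) of rank `n`: a bijection of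
`{-n,...,-1,1,...,n}` onto itself satisfying `σ(-i) = -σ(i)`. -/
def IsSignedPerm (n : ℕ) (σ : ℤ → ℤ) : Prop :=
  (∀ i : ℤ, σ (-i) = -σ i) ∧ Set.BijOn σ (SignedSet n) (SignedSet n)

/-- Number of weak exceedances: `#{j ∈ [n] : σ(j) ≥ j}`. -/
noncomputable def wexB (n : ℕ) (σ : ℤ → ℤ) : ℕ :=
  ((Finset.Icc (1 : ℤ) (n : ℤ)).filter (fun j => j ≤ σ j)).card

/-- Number of negative entries: `#{j ∈ [n] : σ(j) < 0}`. -/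
noncomputable def negB (n : ℕ) (σ : ℤ → ℤ) : ℕ :=
  ((Finset.Icc (1 : ℤ) (n : ℤ)).filter (fun j => σ j < 0)).card

/-- Two strictly increasing chains `b₁ < ... < b_k ≤ c₁ < ... < c_k`. -/
def Chain2 {k : ℕ} (b c : Fin k → ℤ) : Prop :=
  StrictMono b ∧ StrictMono c ∧ ∀ i j : Fin k, b i ≤ c j

/-- `σ` has a `k`-crossing: a `k`-subset of `[n]` (listed as `a`) which is an upper
`k`-crossing (first or second form) or a lower `k`-crossing. -/
def IsKCrossB (n : ℕ) (σ : ℤ → ℤ) : ℕ → Prop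
  | 0 => True
  | (k + 1) => ∃ a : Fin (k + 1) → ℤ,
      (∀ i, 1 ≤ a i ∧ a i ≤ (n : ℤ)) ∧ Function.Injective a ∧
      (Chain2 a (fun i => σ (a i)) ∨
       Chain2 (Function.update a 0 (-(a 0)))
              (Function.update (fun i => σ (a i)) 0 (-(σ (a 0)))) ∨
       (StrictMono a ∧ StrictMono (fun i => σ (a i)) ∧
        ∀ i j : Fin (k + 1), σ (a i) < a j))

/-- `σ` has a `k`-nesting. -/
def IsKNestB (n : ℕ) (σ : ℤ → ℤ) : ℕ → Prop
  | 0 => True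
  | (k + 1) => ∃ a : Fin (k + 1) → ℤ,
      (∀ i, 1 ≤ a i ∧ a i ≤ (n : ℤ)) ∧ Function.Injective a ∧
      ((StrictMono a ∧ StrictAnti (fun i => σ (a i)) ∧
        ∀ i j : Fin (k + 1), a i ≤ σ (a j)) ∨
       Chain2 (Function.update a 0 (-(a 0)))
              (Function.update (fun i => σ (a i.rev)) 0 (-(σ (a (0 : Fin (k + 1)).rev)))) ∨
       (StrictMono a ∧ StrictAnti (fun i => σ (a i)) ∧
        ∀ i j : Fin (k + 1), σ (a i) < a j))

/-- `cro*_B(σ)`: the largest `k` such that `σ` has a `k`-crossing. -/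
noncomputable def croStarB (n : ℕ) (σ : ℤ → ℤ) : ℕ := sSup {k : ℕ | IsKCrossB n σ k}

/-- `nes*_B(σ)`: the largest `k` such that `σ` has a `k`-nesting. -/
noncomputable def nesStarB (n : ℕ) (σ : ℤ → ℤ) : ℕ := sSup {k : ℕ | IsKNestB n σ k}

/-- Concrete model of `B_n`: a permutation of `Fin n` together with a sign vector. -/
abbrev BnModel (n : ℕ) := Equiv.Perm (Fin n) × (Fin n → Bool)

def toSignedAux (n : ℕ) (x : BnModel n) (i : ℤ) : ℤ :=
  if h : 1 ≤ i ∧ i ≤ (n : ℤ) then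
    (if x.2 ⟨(i - 1).toNat, by omega⟩ then -(((x.1 ⟨(i - 1).toNat, by omega⟩ : Fin n) : ℤ) + 1)
     else ((x.1 ⟨(i - 1).toNat, by omega⟩ : Fin n) : ℤ) + 1)
  else i

/-- The signed permutation `ℤ → ℤ` associated to a pair (permutation, sign vector). -/
def toSigned (n : ℕ) (x : BnModel n) : ℤ → ℤ :=
  fun i => if 0 < i then toSignedAux n x i else -toSignedAux n x (-i)

/-! ### decidability of crossings -/

instance decSM {m : ℕ} (f : Fin m → ℤ) : Decidable (StrictMono f) :=
  inferInstanceAs (Decidable (∀ i j : Fin m, i < j → f i < f j))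

instance decCh {m : ℕ} (b c : Fin m → ℤ) : Decidable (Chain2 b c) :=
  inferInstanceAs (Decidable (StrictMono b ∧ StrictMono c ∧ ∀ i j : Fin m, b i ≤ c j))

def CrossCond {k : ℕ} (σ : ℤ → ℤ) (a : Fin (k + 1) → ℤ) : Prop :=
  Chain2 a (fun i => σ (a i)) ∨
  Chain2 (Function.update a 0 (-(a 0)))
         (Function.update (fun i => σ (a i)) 0 (-(σ (a 0)))) ∨
  (StrictMono a ∧ StrictMono (fun i => σ (a i)) ∧
   ∀ i j : Fin (k + 1), σ (a i) < a j)

instance decCC {k : ℕ} (σ : ℤ → ℤ) (a : Fin (k + 1) → ℤ) : Decidable (CrossCond σ a) := by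
  unfold CrossCond; infer_instance

def KCrossFin (n k : ℕ) (σ : ℤ → ℤ) : Prop :=
  ∃ f : Fin (k + 1) → Fin n, Function.Injective f ∧ CrossCond σ (fun i => (f i : ℤ) + 1)

instance decKCF (n k : ℕ) (σ : ℤ → ℤ) : Decidable (KCrossFin n k σ) := by
  unfold KCrossFin; infer_instance

lemma isKCrossB_succ (n k : ℕ) (σ : ℤ → ℤ) :
    IsKCrossB n σ (k + 1) ↔ ∃ a : Fin (k + 1) → ℤ,
      (∀ i, 1 ≤ a i ∧ a i ≤ (n : ℤ)) ∧ Function.Injective a ∧ CrossCond σ a := Iff.rfl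

lemma isKCrossB_iff_fin (n k : ℕ) (σ : ℤ → ℤ) :
    IsKCrossB n σ (k + 1) ↔ KCrossFin n k σ := by
  rw [isKCrossB_succ]
  constructor
  · rintro ⟨a, hb, hinj, hc⟩
    refine ⟨fun i => ⟨(a i - 1).toNat, by have := hb i; omega⟩, ?_, ?_⟩
    · intro i j hf
      apply hinj
      have h1 := hb i; have h2 := hb j
      have := congrArg (fun t : Fin n => (t : ℕ)) hf
      simp only at this
      omega
    · have hfa : (fun i => (((⟨(a i - 1).toNat, by have := hb i; omega⟩ : Fin n) : ℕ) : ℤ) + 1) = a := by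
        funext i
        show ((a i - 1).toNat : ℤ) + 1 = a i
        have := hb i; omega
      rw [hfa]; exact hc
  · rintro ⟨f, hinj, hc⟩
    refine ⟨fun i => (f i : ℤ) + 1, ?_, ?_, hc⟩
    · intro i
      show 1 ≤ ((f i : ℕ) : ℤ) + 1 ∧ ((f i : ℕ) : ℤ) + 1 ≤ (n : ℤ)
      have := (f i).isLt
      omega
    · intro i j hf
      have hf' : ((f i : ℕ) : ℤ) + 1 = ((f j : ℕ) : ℤ) + 1 := hf
      exact hinj (Fin.ext (by omega))

/-! ### general lemmas -/

lemma strictMono_icc {m : ℕ} (a : Fin m → ℤ) (mono : StrictMono a)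
    (lb : ∀ i, 1 ≤ a i) (ub : ∀ i, a i ≤ (m : ℤ)) (i : Fin m) : a i = (i : ℤ) + 1 := by
  have claim1 : ∀ t (h : t < m), (t : ℤ) + 1 ≤ a ⟨t, h⟩ := by
    intro t
    induction t with
    | zero => intro h; simpa using lb ⟨0, h⟩
    | succ s ih =>
      intro h
      have h1 : s < m := by omega
      have h2 := mono (show (⟨s, h1⟩ : Fin m) < ⟨s + 1, h⟩ from by simp [Fin.lt_def])
      have h3 := ih h1
      push_cast at h3 ⊢
      omega
  have claim2 : ∀ t (h : t < m), a ⟨m - 1 - t, by omega⟩ ≤ (m : ℤ) - t := by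
    intro t
    induction t with
    | zero => intro h; simpa using ub ⟨m - 1 - 0, by omega⟩
    | succ s ih =>
      intro h
      have h1 : s < m := by omega
      have h2 := mono (show (⟨m - 1 - (s + 1), by omega⟩ : Fin m) < ⟨m - 1 - s, by omega⟩
        from by simp [Fin.lt_def]; omega)
      have h3 := ih h1
      push_cast at h3 ⊢
      omega
  have hA := claim1 i.val i.isLt
  have hB := claim2 (m - 1 - i.val) (by omega)
  have hidx : (⟨m - 1 - (m - 1 - i.val), by omega⟩ : Fin m) = i := by
    apply Fin.ext; simp; omega
  rw [hidx] at hB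
  have hA' : (i : ℤ) + 1 ≤ a i := by simpa using hA
  have hB' : a i ≤ (m : ℤ) - ((m - 1 - i.val : ℕ) : ℤ) := hB
  have := i.isLt
  omega

lemma surj_icc {m : ℕ} (a : Fin m → ℤ) (inj : Function.Injective a)
    (lb : ∀ i, 1 ≤ a i) (ub : ∀ i, a i ≤ (m : ℤ)) (v : ℤ) (h1 : 1 ≤ v) (h2 : v ≤ (m : ℤ)) :
    ∃ i, a i = v := by
  have hsub : Finset.image a Finset.univ ⊆ Finset.Icc 1 (m : ℤ) := by
    intro z hz
    simp only [Finset.mem_image] at hz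
    obtain ⟨i, _, rfl⟩ := hz
    exact Finset.mem_Icc.mpr ⟨lb i, ub i⟩
  have hcard : (Finset.Icc (1 : ℤ) (m : ℤ)).card ≤ (Finset.image a Finset.univ).card := by
    rw [Finset.card_image_of_injective _ inj, Int.card_Icc]
    simp
  have heq := Finset.eq_of_subset_of_card_le hsub hcard
  have hv : v ∈ Finset.image a Finset.univ := by
    rw [heq]; exact Finset.mem_Icc.mpr ⟨h1, h2⟩
  simpa using hv

/-! ### toSigned lemmas -/

lemma toSigned_cases (n : ℕ) (x : BnModel n) (i : ℤ) (h1 : 1 ≤ i) (h2 : i ≤ (n : ℤ)) :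
    ∃ f : Fin n, (f : ℤ) = i - 1 ∧
      ((x.2 f = true ∧ toSigned n x i = -((x.1 f : ℤ) + 1)) ∨
       (x.2 f = false ∧ toSigned n x i = (x.1 f : ℤ) + 1)) := by
  refine ⟨⟨(i - 1).toNat, by omega⟩, by simp; omega, ?_⟩
  unfold toSigned toSignedAux
  rw [if_pos (by omega : (0 : ℤ) < i), dif_pos (⟨h1, h2⟩ : 1 ≤ i ∧ i ≤ (n : ℤ))]
  cases hb : x.2 ⟨(i - 1).toNat, by omega⟩ with
  | true => simp
  | false => simp

lemma toSigned_bounds (n : ℕ) (x : BnModel n) (i : ℤ) (h1 : 1 ≤ i) (h2 : i ≤ (n : ℤ)) :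
    toSigned n x i ≠ 0 ∧ -(n : ℤ) ≤ toSigned n x i ∧ toSigned n x i ≤ (n : ℤ) := by
  obtain ⟨f, -, hc⟩ := toSigned_cases n x i h1 h2
  have hf : ((x.1 f : ℕ) : ℤ) < (n : ℤ) := by exact_mod_cast (x.1 f).isLt
  have hf0 : (0 : ℤ) ≤ ((x.1 f : ℕ) : ℤ) := Int.ofNat_nonneg _
  rcases hc with ⟨-, h⟩ | ⟨-, h⟩ <;> rw [h] <;> refine ⟨by omega, by omega, by omega⟩

lemma toSigned_injOn (n : ℕ) (x : BnModel n) (i j : ℤ) (hi1 : 1 ≤ i) (hi2 : i ≤ (n : ℤ))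
    (hj1 : 1 ≤ j) (hj2 : j ≤ (n : ℤ)) (h : toSigned n x i = toSigned n x j) : i = j := by
  obtain ⟨f, hf, hcf⟩ := toSigned_cases n x i hi1 hi2
  obtain ⟨g, hg, hcg⟩ := toSigned_cases n x j hj1 hj2
  have key : x.1 f = x.1 g := by
    have hfn : (0 : ℤ) ≤ ((x.1 f : ℕ) : ℤ) := Int.ofNat_nonneg _
    have hgn : (0 : ℤ) ≤ ((x.1 g : ℕ) : ℤ) := Int.ofNat_nonneg _
    have : ((x.1 f : ℕ) : ℤ) = ((x.1 g : ℕ) : ℤ) := by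
      rcases hcf with ⟨-, hc1⟩ | ⟨-, hc1⟩ <;> rcases hcg with ⟨-, hc2⟩ | ⟨-, hc2⟩ <;>
        rw [hc1, hc2] at h <;> omega
    exact Fin.ext (by exact_mod_cast this)
  have hfg : f = g := x.1.injective key
  have : (f : ℤ) = (g : ℤ) := by rw [hfg]
  omega

/-! ### the unique maximal-crossing permutation -/

lemma key_unique (n : ℕ) (hn : 3 ≤ n) (x : BnModel n) (h : IsKCrossB n (toSigned n x) n) :
    ∀ i : ℤ, 1 ≤ i → i ≤ (n : ℤ) → toSigned n x i = i - ((n : ℤ) + 1) := by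
  obtain ⟨k, rfl⟩ : ∃ k, n = k + 3 := ⟨n - 3, by omega⟩
  set σ := toSigned (k + 3) x with hσ
  obtain ⟨a, hbound, hinj, hcase⟩ : ∃ a : Fin (k + 3) → ℤ,
      (∀ i, 1 ≤ a i ∧ a i ≤ ((k + 3 : ℕ) : ℤ)) ∧ Function.Injective a ∧ CrossCond σ a := h
  have hb1 : ∀ i, 1 ≤ a i := fun i => (hbound i).1
  have hb2 : ∀ i, a i ≤ ((k + 3 : ℕ) : ℤ) := fun i => (hbound i).2
  have hσb : ∀ i : Fin (k + 3), σ (a i) ≠ 0 ∧ -((k + 3 : ℕ) : ℤ) ≤ σ (a i) ∧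
      σ (a i) ≤ ((k + 3 : ℕ) : ℤ) := fun i => toSigned_bounds _ x (a i) (hb1 i) (hb2 i)
  have hinjσ : ∀ i j : Fin (k + 3), σ (a i) = σ (a j) → i = j := by
    intro i j hij
    exact hinj (toSigned_injOn _ x (a i) (a j) (hb1 i) (hb2 i) (hb1 j) (hb2 j) hij)
  have hv0 : ((0 : Fin (k + 3)) : ℕ) = 0 := rfl
  have hv1 : ((1 : Fin (k + 3)) : ℕ) = 1 := by
    show ((1 : Fin (k + 1 + 2)) : ℕ) = 1; exact Fin.val_one _
  have hv2 : ((2 : Fin (k + 3)) : ℕ) = 2 := by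
    rw [show ((2 : Fin (k + 3)) : ℕ) = 2 % (k + 3) from rfl]
    exact Nat.mod_eq_of_lt (by omega)
  have h01 : (0 : Fin (k + 3)) < 1 := by rw [Fin.lt_def, hv0, hv1]; omega
  have h12 : (1 : Fin (k + 3)) < 2 := by rw [Fin.lt_def, hv1, hv2]; omega
  have h10 : (1 : Fin (k + 3)) ≠ 0 := by
    intro e; rw [e, hv0] at hv1; omega
  have hcast : ((k + 3 : ℕ) : ℤ) = (k : ℤ) + 3 := by push_cast; ring
  rcases hcase with ⟨hma, hmc, hbc⟩ | ⟨hmb, hmc, hbc⟩ | ⟨hma, hmc, hlc⟩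
  · -- upper crossing, first form : impossible
    exfalso
    obtain ⟨p, hp⟩ := surj_icc a hinj hb1 hb2 ((k + 3 : ℕ) : ℤ) (by omega) le_rfl
    have e1 : a p ≤ σ (a 0) := hbc p 0
    have e2 : σ (a 0) < σ (a 1) := hmc h01
    have := hσb 0; have := hσb 1
    rw [hp] at e1
    omega
  · -- upper crossing, second form : impossible
    exfalso
    obtain ⟨p, hp⟩ := surj_icc a hinj hb1 hb2 ((k + 3 : ℕ) : ℤ) (by omega) le_rfl
    have hc1 : Function.update (fun i => σ (a i)) 0 (-(σ (a 0))) 1 = σ (a 1) :=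
      Function.update_of_ne h10 _ _
    have hc0 : Function.update (fun i => σ (a i)) 0 (-(σ (a 0))) 0 = -(σ (a 0)) :=
      Function.update_self _ _ _
    have e3 := hmc h01
    have e4 := hmc h12
    rw [hc0, hc1] at e3
    have hc2 : Function.update (fun i => σ (a i)) 0 (-(σ (a 0))) 2 = σ (a 2) := by
      apply Function.update_of_ne
      intro e; rw [e, hv0] at hv2; omega
    rw [hc1, hc2] at e4
    have hs0 := hσb 0; have hs1 := hσb 1; have hs2 := hσb 2
    by_cases hp0 : p = 0
    · obtain ⟨q, hq⟩ := surj_icc a hinj hb1 hb2 (((k + 3 : ℕ) : ℤ) - 1) (by omega) (by omega)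
      have hq0 : q ≠ 0 := by
        intro e; rw [e] at hq; rw [hp0] at hp; omega
      have e2 := hbc q 0
      rw [Function.update_of_ne hq0, hc0, hq] at e2
      omega
    · have e2 := hbc p 1
      rw [Function.update_of_ne hp0, hc1, hp] at e2
      omega
  · -- lower crossing : forces σ i = i - (n+1)
    have ha : ∀ i, a i = (i : ℤ) + 1 := strictMono_icc a hma hb1 hb2
    have ha0 : a 0 = 1 := by rw [ha 0, hv0]; simp
    have hub : ∀ i, σ (a i) ≤ -1 := by
      intro i
      have := hlc i 0
      rw [ha0] at this
      have := (hσb i).1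
      omega
    have key2 := strictMono_icc (fun i => σ (a i) + ((k + 3 : ℕ) : ℤ) + 1)
      (fun i j hij => by
        have h5 : σ (a i) < σ (a j) := hmc hij
        show σ (a i) + ((k + 3 : ℕ) : ℤ) + 1 < σ (a j) + ((k + 3 : ℕ) : ℤ) + 1
        omega)
      (fun i => by
        have := (hσb i).2.1
        show 1 ≤ σ (a i) + ((k + 3 : ℕ) : ℤ) + 1
        omega)
      (fun i => by
        have := hub i
        show σ (a i) + ((k + 3 : ℕ) : ℤ) + 1 ≤ ((k + 3 : ℕ) : ℤ)
        omega)
    intro i hi1 hi2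
    set j : Fin (k + 3) := ⟨(i - 1).toNat, by omega⟩ with hj
    have hji : ((j : ℕ) : ℤ) = i - 1 := by simp [hj]; omega
    have haj : a j = i := by rw [ha j, hji]; ring
    have h7 : σ (a j) + ((k + 3 : ℕ) : ℤ) + 1 = ((j : ℕ) : ℤ) + 1 := key2 j
    rw [haj, hji] at h7
    show σ i = i - (((k + 3 : ℕ) : ℤ) + 1)
    omega

def xStar (n : ℕ) : BnModel n := (Fin.revPerm, fun _ => true)

lemma toSigned_xStar (n : ℕ) (i : ℤ) (h1 : 1 ≤ i) (h2 : i ≤ (n : ℤ)) :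
    toSigned n (xStar n) i = i - ((n : ℤ) + 1) := by
  obtain ⟨f, hf, hc⟩ := toSigned_cases n (xStar n) i h1 h2
  rcases hc with ⟨-, hv⟩ | ⟨hb, -⟩
  · rw [hv]
    show -((((Fin.revPerm f : Fin n) : ℕ) : ℤ) + 1) = i - ((n : ℤ) + 1)
    have h3 : ((Fin.revPerm f : Fin n) : ℕ) = n - ((f : ℕ) + 1) := Fin.val_rev f
    have h4 := f.isLt
    rw [h3]
    omega
  · exact absurd hb (by simp [xStar])

lemma xStar_cross (n : ℕ) (hn : 3 ≤ n) : IsKCrossB n (toSigned n (xStar n)) n := by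
  obtain ⟨k, rfl⟩ : ∃ k, n = k + 3 := ⟨n - 3, by omega⟩
  show ∃ a : Fin (k + 3) → ℤ,
      (∀ i, 1 ≤ a i ∧ a i ≤ ((k + 3 : ℕ) : ℤ)) ∧ Function.Injective a ∧
      CrossCond (toSigned (k + 3) (xStar (k + 3))) a
  refine ⟨fun i => ((i : ℕ) : ℤ) + 1, ?_, ?_, Or.inr (Or.inr ⟨?_, ?_, ?_⟩)⟩
  · intro i
    show 1 ≤ ((i : ℕ) : ℤ) + 1 ∧ ((i : ℕ) : ℤ) + 1 ≤ ((k + 3 : ℕ) : ℤ)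
    have := i.isLt
    omega
  · intro i j hij
    have hij' : ((i : ℕ) : ℤ) + 1 = ((j : ℕ) : ℤ) + 1 := hij
    exact Fin.ext (by omega)
  · intro i j hij
    have : (i : ℕ) < (j : ℕ) := hij
    show ((i : ℕ) : ℤ) + 1 < ((j : ℕ) : ℤ) + 1
    omega
  · intro i j hij
    have : (i : ℕ) < (j : ℕ) := hij
    show toSigned (k + 3) (xStar (k + 3)) (((i : ℕ) : ℤ) + 1) <
      toSigned (k + 3) (xStar (k + 3)) (((j : ℕ) : ℤ) + 1)
    rw [toSigned_xStar _ _ (by omega) (by have := i.isLt; omega),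
        toSigned_xStar _ _ (by omega) (by have := j.isLt; omega)]
    omega
  · intro i j
    show toSigned (k + 3) (xStar (k + 3)) (((i : ℕ) : ℤ) + 1) < ((j : ℕ) : ℤ) + 1
    rw [toSigned_xStar _ _ (by omega) (by have := i.isLt; omega)]
    have := i.isLt
    omega

lemma eq_xStar (n : ℕ) (x : BnModel n)
    (h : ∀ i : ℤ, 1 ≤ i → i ≤ (n : ℤ) → toSigned n x i = i - ((n : ℤ) + 1)) :
    x = xStar n := by
  have main : ∀ j : Fin n, x.1 j = Fin.revPerm j ∧ x.2 j = true := by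
    intro j
    have hj1 : (1 : ℤ) ≤ (j : ℤ) + 1 := by omega
    have hj2 : ((j : ℕ) : ℤ) + 1 ≤ (n : ℤ) := by have := j.isLt; omega
    obtain ⟨f, hf, hc⟩ := toSigned_cases n x ((j : ℤ) + 1) hj1 hj2
    have hfj : f = j := Fin.ext (by omega)
    subst hfj
    have hv := h (((f : ℕ) : ℤ) + 1) hj1 hj2
    rcases hc with ⟨hb, hval⟩ | ⟨-, hval⟩
    · refine ⟨?_, hb⟩
      rw [hval] at hv
      apply Fin.ext
      have h3 : ((Fin.revPerm f : Fin n) : ℕ) = n - ((f : ℕ) + 1) := Fin.val_rev f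
      have h4 := f.isLt
      have h5 := (x.1 f).isLt
      omega
    · exfalso
      rw [hval] at hv
      have h5 := f.isLt
      have h6 : (0 : ℤ) ≤ ((x.1 f : ℕ) : ℤ) := Int.ofNat_nonneg _
      omega
  have h1 : x.1 = Fin.revPerm := Equiv.ext fun j => (main j).1
  have h2 : x.2 = fun _ => true := funext fun j => (main j).2
  show x = (Fin.revPerm, fun _ => true)
  rw [← h1, ← h2]


open scoped Classical in
/-- Enumeration of maximum crossings: for n ≥ 3 there is exactly one signed permutation
of rank n whose full index set [n] forms an n-crossing, namely σ(i) = i − (n+1);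
for 1 ≤ n ≤ 2 there are exactly two. -/
theorem count_max_crossings (n : ℕ) :
    (3 ≤ n →
      ((Finset.univ : Finset (BnModel n)).filter
          (fun x => IsKCrossB n (toSigned n x) n)).card = 1 ∧
      (∀ x : BnModel n, IsKCrossB n (toSigned n x) n →
        ∀ i : ℤ, 1 ≤ i → i ≤ (n : ℤ) → toSigned n x i = i - ((n : ℤ) + 1))) ∧
    (1 ≤ n → n ≤ 2 →
      ((Finset.univ : Finset (BnModel n)).filter
          (fun x => IsKCrossB n (toSigned n x) n)).card = 2) := by
  constructor
  · intro hn
    refine ⟨?_, fun x hx => key_unique n hn x hx⟩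
    rw [Finset.card_eq_one]
    refine ⟨xStar n, ?_⟩
    ext x
    simp only [Finset.mem_filter, Finset.mem_univ, true_and, Finset.mem_singleton]
    constructor
    · intro hx
      exact eq_xStar n x (key_unique n hn x hx)
    · rintro rfl
      exact xStar_cross n hn
  · intro h1 h2
    interval_cases n
    · rw [Finset.filter_congr (fun x _ => isKCrossB_iff_fin 1 0 (toSigned 1 x))]
      decide
    · rw [Finset.filter_congr (fun x _ => isKCrossB_iff_fin 2 1 (toSigned 2 x))]
      decide
end

section
/- A signed permutation σ of rank n has cro*_B(σ) = n (i.e., an n-crossing using all of [n]) via the lower crossing condition if and only if σ(1) < σ(2) < ... < σ(n) < 1; for n ≥ 3 this forces σ(i) = i − (n+1) for all i ∈ [n]. -/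
/-- σ has an n-crossing using all of [n] via the lower crossing condition iff
σ(1) < σ(2) < ... < σ(n) < 1; for n ≥ 3 this forces σ(i) = i − (n+1). -/
theorem full_lower_crossing_iff (n : ℕ) (hn : 1 ≤ n) (σ : ℤ → ℤ) (h : IsSignedPerm n σ) :
    ((StrictMono (fun i : Fin n => σ ((i : ℤ) + 1)) ∧
        ∀ i j : Fin n, σ ((i : ℤ) + 1) < (j : ℤ) + 1) ↔
      ((∀ i j : ℤ, 1 ≤ i → i < j → j ≤ (n : ℤ) → σ i < σ j) ∧ σ (n : ℤ) < 1)) ∧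
    (3 ≤ n → (∀ i j : ℤ, 1 ≤ i → i < j → j ≤ (n : ℤ) → σ i < σ j) → σ (n : ℤ) < 1 →
      ∀ i : ℤ, 1 ≤ i → i ≤ (n : ℤ) → σ i = i - ((n : ℤ) + 1)) := by
  obtain ⟨hsign, hbij⟩ := h
  constructor
  · constructor
    · rintro ⟨hmono, hlt⟩
      constructor
      · intro i j hi hij hjn
        have hi' : (i - 1).toNat < n := by omega
        have hj' : (j - 1).toNat < n := by omega
        have hab : (⟨(i-1).toNat, hi'⟩ : Fin n) < ⟨(j-1).toNat, hj'⟩ := by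
          simp [Fin.lt_def]; omega
        have := hmono hab
        simp only at this
        rw [show (((⟨(i-1).toNat, hi'⟩ : Fin n) : ℤ)) + 1 = i by simp; omega,
          show (((⟨(j-1).toNat, hj'⟩ : Fin n) : ℤ)) + 1 = j by simp; omega] at this
        exact this
      · have := hlt ⟨n-1, by omega⟩ ⟨0, by omega⟩
        simp only [Fin.val_mk] at this
        rw [show (((n-1 : ℕ) : ℤ)) + 1 = (n:ℤ) by omega] at this
        simpa using this
    · rintro ⟨hmono, hlast⟩
      constructor
      · intro a b hab
        have ha := a.isLt
        have hb := b.isLt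
        have hab' : (a : ℕ) < (b : ℕ) := hab
        exact hmono _ _ (by omega) (by omega) (by exact_mod_cast Int.ofNat_le.mpr hb)
      · intro i j
        have hi := i.isLt
        have hle : σ ((i : ℤ) + 1) ≤ σ (n : ℤ) := by
          rcases eq_or_lt_of_le (Nat.succ_le_of_lt hi) with heq | hlt'
          · rw [show ((i : ℤ) + 1) = (n : ℤ) by omega]
          · exact le_of_lt (hmono _ _ (by omega) (by omega) le_rfl)
        have hj : (0:ℤ) ≤ (j : ℤ) := Int.ofNat_nonneg _
        omega
  · intro _ hmono hlast i hi hin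
    have key : ∀ k : ℕ, ∀ i : ℤ, 1 ≤ i → i + (k:ℤ) ≤ (n:ℤ) → σ i + (k:ℤ) ≤ σ (i + (k:ℤ)) := by
      intro k
      induction k with
      | zero => intro i hi _; simp
      | succ k ih =>
        intro i hi hk
        push_cast
        push_cast at hk
        rw [show i + ((k:ℤ) + 1) = (i + (k:ℤ)) + 1 by ring]
        have h1 := ih i hi (by omega)
        have h2 := hmono (i + (k:ℤ)) (i + (k:ℤ) + 1) (by omega) (by omega) (by omega)
        omega
    have h1 := key (i - 1).toNat 1 (by norm_num) (by omega)
    rw [show (1:ℤ) + ((i-1).toNat : ℤ) = i by omega] at h1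
    have h2 := key (n - i).toNat i hi (by omega)
    rw [show i + (((n:ℤ) - i).toNat : ℤ) = (n:ℤ) by omega] at h2
    have hm1 : σ 1 ∈ SignedSet n := hbij.mapsTo ⟨by norm_num, by rw [abs_one]; exact_mod_cast hn⟩
    have hmn : σ (n:ℤ) ∈ SignedSet n := hbij.mapsTo ⟨by positivity,
      by rw [abs_of_pos (by positivity)]⟩
    obtain ⟨hne1, habs1⟩ := hm1
    obtain ⟨hnen, _⟩ := hmn
    rw [abs_le] at habs1
    omega
end
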